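/- arXiv:1507.01089 — 3 statements merged into one kernel-verified Lean document; each statement's English description precedes it below -/
import Mathlib

section
/- The φ-shuffle product ⧢_φ on K⟨Y⟩ is associative if and only if the map φ : KY ⊗ KY → KY is associative, and ⧢_φ is commutative if and only if φ is commutative. -/
noncomputable section

open Finsupp

variable {K : Type*} [CommRing K] [Algebra ℚ K]
variable {Y : Type*} [DecidableEq Y]

/-- The word `w ∈ Y*` viewed as a basis element of `K⟨Y⟩`. -/
def word (w : List Y) : List Y →₀ K := Finsupp.single w 1

/-- Left concatenation by a letter, as a linear endomorphism of `K⟨Y⟩`. -/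
def consL (a : Y) : (List Y →₀ K) →ₗ[K] (List Y →₀ K) :=
  Finsupp.lmapDomain K K (List.cons a)

/-- `m` is the `φ`-deformed shuffle product: it satisfies the initialization
`1 ⧢ w = w ⧢ 1 = w` and the recursion
`(au) ⧢ (bv) = a (u ⧢ bv) + b (au ⧢ v) + φ(a,b)(u ⧢ v)`. -/
def IsPhiShuffle (φ : Y → Y → (Y →₀ K))
    (m : (List Y →₀ K) →ₗ[K] (List Y →₀ K) →ₗ[K] (List Y →₀ K)) : Prop :=
  (∀ w : List Y, m (word []) (word w) = word w) ∧
  (∀ w : List Y, m (word w) (word []) = word w) ∧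
  ∀ (a b : Y) (u v : List Y),
    m (word (a :: u)) (word (b :: v)) =
      consL a (m (word u) (word (b :: v))) + consL b (m (word (a :: u)) (word v)) +
      (φ a b).sum fun c k => k • consL c (m (word u) (word v))

/-- Bilinear extension of `φ` to `KY`. -/
def phiExt (φ : Y → Y → (Y →₀ K)) (p q : Y →₀ K) : Y →₀ K :=
  p.sum fun a ka => q.sum fun b kb => (ka * kb) • φ a b

/-- The extension of `φ` to `KY ⊗ KY → KY` is associative. -/
def PhiAssoc (φ : Y → Y → (Y →₀ K)) : Prop :=
  ∀ a b c : Y, phiExt φ (φ a b) (Finsupp.single c 1) = phiExt φ (Finsupp.single a 1) (φ b c)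

/-- The extension of `φ` is commutative. -/
def PhiComm (φ : Y → Y → (Y →₀ K)) : Prop := ∀ a b : Y, φ a b = φ b a

/-- `φ` is dualizable: for every letter `z` only finitely many pairs of letters
have `z` in the support of their `φ`-product. -/
def PhiDualizable (φ : Y → Y → (Y →₀ K)) : Prop :=
  ∀ z : Y, {p : Y × Y | φ p.1 p.2 z ≠ 0}.Finite

/-- Extension of an associative `φ` to nonempty words: `φ(xw) = φ(x, φ(w))`. -/
def phiWord (φ : Y → Y → (Y →₀ K)) : List Y → (Y →₀ K)
  | [] => 0
  | [x] => Finsupp.single x 1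
  | x :: y :: w => (phiWord φ (y :: w)).sum fun b k => k • φ x b

/-- `φ` is moderate: for every letter `y`, only finitely many nonempty words `w`
satisfy `⟨y, φ(w)⟩ ≠ 0`. -/
def PhiModerate (φ : Y → Y → (Y →₀ K)) : Prop :=
  ∀ y : Y, {w : List Y | w ≠ [] ∧ phiWord φ w y ≠ 0}.Finite

/-- Pairing of two polynomials (the words form an orthonormal basis). -/
def pairPP (p q : List Y →₀ K) : K := p.sum fun w a => a * q w

/-- Pairing `⟨S, p⟩` of a series with a polynomial. -/
def pairPS (S : List Y → K) (p : List Y →₀ K) : K := p.sum fun w a => a * S w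

/-- Concatenation product on `K⟨Y⟩`. -/
def concP (p q : List Y →₀ K) : List Y →₀ K :=
  p.sum fun u a => q.sum fun v b => Finsupp.single (u ++ v) (a * b)

/-- Concatenation powers. -/
def concPow (p : List Y →₀ K) : ℕ → (List Y →₀ K)
  | 0 => word []
  | n + 1 => concP p (concPow p n)

/-- Powers with respect to a bilinear product `m`. -/
def mpow (m : (List Y →₀ K) →ₗ[K] (List Y →₀ K) →ₗ[K] (List Y →₀ K))
    (p : List Y →₀ K) : ℕ → (List Y →₀ K)
  | 0 => word []
  | n + 1 => m p (mpow m p n)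

/-- `m`-product of a list of polynomials. -/
def prodM (m : (List Y →₀ K) →ₗ[K] (List Y →₀ K) →ₗ[K] (List Y →₀ K))
    (L : List (List Y →₀ K)) : List Y →₀ K :=
  L.foldr (fun p acc => m p acc) (word [])

/-- The unit series. -/
def oneS : List Y → K := fun w => if w = [] then 1 else 0

/-- Concatenation (Cauchy) product of series. -/
def mulS (S T : List Y → K) : List Y → K := fun w =>
  ∑ i ∈ Finset.range (w.length + 1), S (w.take i) * T (w.drop i)

/-- Concatenation powers of a series. -/
def powS (S : List Y → K) : ℕ → (List Y → K)
  | 0 => oneS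
  | n + 1 => mulS S (powS S n)

/-- Concatenation product of a list of series. -/
def prodS (L : List (List Y → K)) : List Y → K := L.foldr (fun S acc => mulS S acc) oneS

/-- The coproduct `Δ_{⧢_φ}` dual to `m`, on series: `Δ(S)(u,v) = ⟨S, u ⧢_φ v⟩`. -/
def DeltaS (m : (List Y →₀ K) →ₗ[K] (List Y →₀ K) →ₗ[K] (List Y →₀ K))
    (S : List Y → K) : List Y × List Y → K :=
  fun p => pairPS S (m (word p.1) (word p.2))

/-- `S` is primitive: `Δ_{⧢_φ}(S) = S ⊗ 1 + 1 ⊗ S`. -/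
def PrimS (m : (List Y →₀ K) →ₗ[K] (List Y →₀ K) →ₗ[K] (List Y →₀ K))
    (S : List Y → K) : Prop :=
  ∀ u v : List Y, DeltaS m S (u, v) =
    (if v = [] then S u else 0) + (if u = [] then S v else 0)

/-- `S` is group-like: `⟨S,1⟩ = 1` and `Δ_{⧢_φ}(S) = S ⊗ S`. -/
def GroupLikeS (m : (List Y →₀ K) →ₗ[K] (List Y →₀ K) →ₗ[K] (List Y →₀ K))
    (S : List Y → K) : Prop :=
  S [] = 1 ∧ ∀ u v : List Y, DeltaS m S (u, v) = S u * S v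

/-- `Δfn` is the (finitely supported) dual coproduct witnessing dualizability of `m`:
`⟨u ⧢_φ v, w⟩ = ⟨u ⊗ v, Δ(w)⟩`. -/
def IsDualWitness (m : (List Y →₀ K) →ₗ[K] (List Y →₀ K) →ₗ[K] (List Y →₀ K))
    (Δfn : List Y → (List Y × List Y →₀ K)) : Prop :=
  ∀ u v w : List Y, (m (word u) (word v)) w = Δfn w (u, v)

/-- All factorizations of a word into nonempty blocks. -/
def cuts : List Y → List (List (List Y))
  | [] => [[]]
  | a :: w =>
    (cuts w).flatMap fun parts =>
      match parts with
      | [] => [[[a]]]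
      | p :: ps => [[a] :: p :: ps, (a :: p) :: ps]

/-- The extended Eulerian projector `π₁` on series:
`π₁(S) = Σ_{k≥1} ((-1)^{k-1}/k) Σ_{u_1⋯u_k = w, u_i ∈ Y⁺} ⟨S, u_1 ⧢_φ ⋯ ⧢_φ u_k⟩ w`. -/
def piOneS (m : (List Y →₀ K) →ₗ[K] (List Y →₀ K) →ₗ[K] (List Y →₀ K))
    (S : List Y → K) : List Y → K := fun w =>
  ((cuts w).map fun parts =>
    algebraMap ℚ K ((-1) ^ (parts.length - 1) / (parts.length : ℚ)) *
      pairPS S (prodM m (parts.map word))).sum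

/-- Logarithm of a series `S` with `⟨S,1⟩ = 1`. -/
def logS (S : List Y → K) : List Y → K := fun w =>
  ∑ n ∈ Finset.Icc 1 w.length,
    algebraMap ℚ K ((-1) ^ (n - 1) / (n : ℚ)) * powS (fun t => S t - oneS t) n w

/-- Convolution of endomorphisms (valued in series), using a dual coproduct witness. -/
def convT (Δfn : List Y → (List Y × List Y →₀ K))
    (f g : (List Y →₀ K) → (List Y → K)) : (List Y →₀ K) → (List Y → K) :=
  fun P w => P.sum fun t a =>
    a * (Δfn t).sum fun p c => c * mulS (f (word p.1)) (g (word p.2)) w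

/-- The convolution unit `e = 1 ∘ ε`. -/
def eT : (List Y →₀ K) → (List Y → K) := fun P w => if w = [] then P [] else 0

/-- Convolution powers `π₁^{⋆ n}` of the Eulerian projector. -/
def convPowPi (m : (List Y →₀ K) →ₗ[K] (List Y →₀ K) →ₗ[K] (List Y →₀ K))
    (Δfn : List Y → (List Y × List Y →₀ K)) : ℕ → ((List Y →₀ K) → (List Y → K))
  | 0 => eT
  | n + 1 => convT Δfn (fun P => piOneS m fun t => P t) (convPowPi m Δfn n)

/-- Lyndon words: nonempty and lexicographically smaller than each proper suffix. -/
def IsLyndon [LinearOrder Y] (w : List Y) : Prop :=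
  w ≠ [] ∧ ∀ u v : List Y, u ≠ [] → v ≠ [] → w = u ++ v → List.Lex (· < ·) w v

/-- Strictly decreasing lists of Lyndon words with positive exponents,
indexing monomials in Lyndon words. -/
abbrev DecLyn (Y : Type*) [LinearOrder Y] :=
  {s : List (List Y × ℕ) // (∀ p ∈ s, IsLyndon p.1 ∧ 0 < p.2) ∧
    s.Chain' fun a b => List.Lex (· < ·) b.1 a.1}

/-- `⧢_φ`-monomial `l₁^{⧢ i₁} ⧢ ⋯ ⧢ l_k^{⧢ i_k}`. -/
def shMonomial (m : (List Y →₀ K) →ₗ[K] (List Y →₀ K) →ₗ[K] (List Y →₀ K))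
    (s : List (List Y × ℕ)) : List Y →₀ K :=
  s.foldr (fun p acc => m (mpow m (word p.1) p.2) acc) (word [])

/-- Concatenation monomial `Π_{l₁}^{i₁} ⋯ Π_{l_k}^{i_k}` in a family `Pi`. -/
def concMonomial (Pi : List Y → (List Y →₀ K)) (s : List (List Y × ℕ)) : List Y →₀ K :=
  s.foldr (fun p acc => concP (concPow (Pi p.1) p.2) acc) (word [])

/-- The singleton index `l¹ ∈ DecLyn Y` attached to a Lyndon word. -/
def singleIdx [LinearOrder Y] (l : List Y) (hl : IsLyndon l) : DecLyn Y :=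
  ⟨[(l, 1)], ⟨fun p hp => by
      rw [List.mem_singleton] at hp; subst hp; exact ⟨hl, Nat.one_pos⟩,
    List.isChain_singleton _⟩⟩

/-- `(s, r)` is the standard factorization of the Lyndon word `l`:
`l = sr` with `s, r` nonempty and `r` the lexicographically least proper suffix. -/
def StdFact [LinearOrder Y] (l s r : List Y) : Prop :=
  l = s ++ r ∧ s ≠ [] ∧ r ≠ [] ∧
  ∀ s' r' : List Y, l = s' ++ r' → s' ≠ [] → r' ≠ [] → r = r' ∨ List.Lex (· < ·) r r'

/-- `Pi` is the family defined by `Π_y = π₁(y)` on letters and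
`Π_l = [Π_s, Π_r]` for the standard factorization `(s,r)` of a Lyndon word `l`. -/
def IsPiFamily [LinearOrder Y]
    (m : (List Y →₀ K) →ₗ[K] (List Y →₀ K) →ₗ[K] (List Y →₀ K))
    (Pi : List Y → (List Y →₀ K)) : Prop :=
  (∀ y : Y, ∀ w : List Y, Pi [y] w = piOneS m (fun t => (word [y] : List Y →₀ K) t) w) ∧
  ∀ l s r : List Y, IsLyndon l → StdFact l s r →
    Pi l = concP (Pi s) (Pi r) - concP (Pi r) (Pi s)

set_option linter.unusedSectionVars false
set_option maxHeartbeats 1000000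

namespace PhiSh

variable {φ : Y → Y → (Y →₀ K)}
variable {m : (List Y →₀ K) →ₗ[K] (List Y →₀ K) →ₗ[K] (List Y →₀ K)}

lemma word_cons (a : Y) (u : List Y) : consL a (word u) = (word (a::u) : List Y →₀ K) := by
  simp [consL, word]

lemma single_eq_smul_word (u : List Y) (k : K) :
    (Finsupp.single u k : List Y →₀ K) = k • word u := by
  simp [word, Finsupp.smul_single']

lemma m_sum_left (ρ : Y →₀ K) (f : Y → (List Y →₀ K)) (Q : List Y →₀ K) :
    m (ρ.sum fun d k => k • f d) Q = ρ.sum fun d k => k • m (f d) Q := by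
  simp [Finsupp.sum, map_sum, LinearMap.sum_apply]

lemma m_sum_right (P : List Y →₀ K) (ρ : Y →₀ K) (f : Y → (List Y →₀ K)) :
    m P (ρ.sum fun d k => k • f d) = ρ.sum fun d k => k • m P (f d) := by
  simp [Finsupp.sum, map_sum]

lemma consL_sum (x : Y) (ρ : Y →₀ K) (f : Y → (List Y →₀ K)) :
    consL x (ρ.sum fun d k => k • f d) = ρ.sum fun d k => k • consL x (f d) := by
  simp [Finsupp.sum, map_sum]

lemma rec_gen (hm : IsPhiShuffle φ m) (a b : Y) (P Q : List Y →₀ K) :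
    m (consL a P) (consL b Q) =
      consL a (m P (consL b Q)) + consL b (m (consL a P) Q) +
      (φ a b).sum fun c k => k • consL c (m P Q) := by
  induction P using Finsupp.induction_linear with
  | zero => simp
  | add f g hf hg =>
      simp only [map_add, LinearMap.add_apply, hf, hg, smul_add, Finsupp.sum_add]
      abel
  | single u ku =>
      induction Q using Finsupp.induction_linear with
      | zero => simp
      | add f g hf hg =>
          simp only [map_add, LinearMap.add_apply, hf, hg, smul_add, Finsupp.sum_add]
          abel
      | single v kv =>
          rw [single_eq_smul_word, single_eq_smul_word]
          simp only [map_smul, LinearMap.smul_apply, word_cons, hm.2.2 a b u v]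
          simp only [smul_add, Finsupp.smul_sum, smul_smul]
          simp [mul_comm, mul_assoc, mul_left_comm]

lemma rec_gen_wr (hm : IsPhiShuffle φ m) (x c : Y) (P : List Y →₀ K) (w : List Y) :
    m (consL x P) (word (c::w)) =
      consL x (m P (word (c::w))) + consL c (m (consL x P) (word w)) +
      (φ x c).sum fun e k => k • consL e (m P (word w)) := by
  rw [← word_cons c w, rec_gen hm, word_cons]

lemma rec_gen_rw (hm : IsPhiShuffle φ m) (a e : Y) (u : List Y) (P : List Y →₀ K) :
    m (word (a::u)) (consL e P) =
      consL a (m (word u) (consL e P)) + consL e (m (word (a::u)) P) +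
      (φ a e).sum fun d k => k • consL d (m (word u) P) := by
  rw [← word_cons a u, rec_gen hm, word_cons]

lemma left_unit (hm : IsPhiShuffle φ m) (p : List Y →₀ K) : m (word []) p = p := by
  induction p using Finsupp.induction_linear with
  | zero => simp
  | add f g hf hg => simp [hf, hg]
  | single u k => rw [single_eq_smul_word, map_smul, hm.1]

lemma right_unit (hm : IsPhiShuffle φ m) (p : List Y →₀ K) : m p (word []) = p := by
  induction p using Finsupp.induction_linear with
  | zero => simp
  | add f g hf hg => simp [hf, hg]
  | single u k => rw [single_eq_smul_word, map_smul, LinearMap.smul_apply, hm.2.1]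

-- phiExt computations
lemma phiExt_single_right (p : Y →₀ K) (c : Y) :
    phiExt φ p (Finsupp.single c 1) = p.sum fun d kd => kd • φ d c := by
  unfold phiExt
  refine Finsupp.sum_congr fun d _ => ?_
  rw [Finsupp.sum_single_index] <;> simp

lemma phiExt_single_left (a : Y) (q : Y →₀ K) :
    phiExt φ (Finsupp.single a 1) q = q.sum fun e ke => ke • φ a e := by
  unfold phiExt
  rw [Finsupp.sum_single_index] <;> simp

lemma double_sum (hφ : PhiAssoc φ) (a b c : Y) (W0 : List Y →₀ K) :
    ((φ a b).sum fun d k => k • ((φ d c).sum fun e k2 => k2 • consL e W0)) =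
    ((φ b c).sum fun e k => k • ((φ a e).sum fun f k2 => k2 • consL f W0)) := by
  set F0 : (Y →₀ K) →ₗ[K] (List Y →₀ K) :=
    Finsupp.lsum K fun e => LinearMap.toSpanSingleton K _ (consL e W0) with hF0def
  have hF0 : ∀ ρ : Y →₀ K, F0 ρ = ρ.sum fun e k => k • consL e W0 := fun ρ => by
    rw [hF0def, Finsupp.lsum_apply]
    exact Finsupp.sum_congr fun e _ => rfl
  have h1 : ((φ a b).sum fun d k => k • ((φ d c).sum fun e k2 => k2 • consL e W0)) =
      F0 (phiExt φ (φ a b) (Finsupp.single c 1)) := by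
    rw [phiExt_single_right, map_finsuppSum]
    exact Finsupp.sum_congr fun d _ => by rw [map_smul, hF0]
  have h2 : ((φ b c).sum fun e k => k • ((φ a e).sum fun f k2 => k2 • consL f W0)) =
      F0 (phiExt φ (Finsupp.single a 1) (φ b c)) := by
    rw [phiExt_single_left, map_finsuppSum]
    exact Finsupp.sum_congr fun e _ => by rw [map_smul, hF0]
  rw [h1, h2, hφ a b c]


lemma assoc_words (hm : IsPhiShuffle φ m) (hφ : PhiAssoc φ) :
    ∀ n (u v w : List Y), u.length + v.length + w.length = n →
      m (m (word u) (word v)) (word w) = m (word u) (m (word v) (word w)) := by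
  intro n
  induction n using Nat.strong_induction_on with
  | _ n ih =>
    intro u v w hn
    match u, v, w with
    | [], v, w => rw [left_unit hm, left_unit hm]
    | u, [], w => rw [right_unit hm, left_unit hm]
    | u, v, [] => rw [right_unit hm, right_unit hm]
    | a :: u, b :: v, c :: w =>
      subst hn
      have I1 : m (m (word u) (word (b::v))) (word (c::w)) =
          m (word u) (m (word (b::v)) (word (c::w))) :=
        ih _ (by simp only [List.length_cons]; omega) _ _ _ rfl
      have I2 : m (m (word (a::u)) (word v)) (word (c::w)) =
          m (word (a::u)) (m (word v) (word (c::w))) :=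
        ih _ (by simp only [List.length_cons]; omega) _ _ _ rfl
      have I3 : m (m (word u) (word (b::v))) (word w) =
          m (word u) (m (word (b::v)) (word w)) :=
        ih _ (by simp only [List.length_cons]; omega) _ _ _ rfl
      have I4 : m (m (word (a::u)) (word v)) (word w) =
          m (word (a::u)) (m (word v) (word w)) :=
        ih _ (by simp only [List.length_cons]; omega) _ _ _ rfl
      have I5 : m (m (word u) (word v)) (word (c::w)) =
          m (word u) (m (word v) (word (c::w))) :=
        ih _ (by simp only [List.length_cons]; omega) _ _ _ rfl
      have I6 : m (m (word u) (word v)) (word w) =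
          m (word u) (m (word v) (word w)) :=
        ih _ (by simp only [List.length_cons]; omega) _ _ _ rfl
      have I7 : m (m (word (a::u)) (word (b::v))) (word w) =
          m (word (a::u)) (m (word (b::v)) (word w)) :=
        ih _ (by simp only [List.length_cons]; omega) _ _ _ rfl
      have ds := double_sum hφ a b c (m (word u) (m (word v) (word w)))
      simp only [hm.2.2, rec_gen_wr hm, rec_gen_rw hm, I1, I2, I3, I4, I5, I6, ← I7,
        map_add, LinearMap.add_apply, m_sum_left, m_sum_right, consL_sum,
        smul_add, Finsupp.sum_add, ds]
      abel

lemma assoc_all (hm : IsPhiShuffle φ m) (hφ : PhiAssoc φ) (p q r : List Y →₀ K) :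
    m (m p q) r = m p (m q r) := by
  induction p using Finsupp.induction_linear with
  | zero => simp
  | add f g hf hg => simp [hf, hg]
  | single u ku =>
    induction q using Finsupp.induction_linear with
    | zero => simp
    | add f g hf hg => simp [hf, hg]
    | single v kv =>
      induction r using Finsupp.induction_linear with
      | zero => simp
      | add f g hf hg => simp [hf, hg]
      | single w kw =>
        simp only [single_eq_smul_word, map_smul, LinearMap.smul_apply]
        rw [assoc_words hm hφ (u.length + v.length + w.length) u v w rfl]

lemma comm_words (hm : IsPhiShuffle φ m) (hφ : PhiComm φ) :
    ∀ n (u v : List Y), u.length + v.length = n → m (word u) (word v) = m (word v) (word u) := by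
  intro n
  induction n using Nat.strong_induction_on with
  | _ n ih =>
    intro u v hn
    match u, v with
    | [], v => rw [hm.1, hm.2.1]
    | u, [] => rw [hm.1, hm.2.1]
    | a :: u, b :: v =>
      subst hn
      rw [hm.2.2 a b u v, hm.2.2 b a v u,
          ih _ (by simp only [List.length_cons]; omega) u (b::v) rfl,
          ih _ (by simp only [List.length_cons]; omega) (a::u) v rfl,
          ih _ (by simp only [List.length_cons]; omega) u v rfl, hφ a b]
      abel

lemma comm_all (hm : IsPhiShuffle φ m) (hφ : PhiComm φ) (p q : List Y →₀ K) :
    m p q = m q p := by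
  induction p using Finsupp.induction_linear with
  | zero => simp
  | add f g hf hg => simp [hf, hg]
  | single u ku =>
    induction q using Finsupp.induction_linear with
    | zero => simp
    | add f g hf hg => simp [hf, hg]
    | single v kv =>
      simp only [single_eq_smul_word, map_smul, LinearMap.smul_apply]
      rw [comm_words hm hφ (u.length + v.length) u v rfl]
      rw [smul_comm]

-- single products
lemma mul_single_single (hm : IsPhiShuffle φ m) (a b : Y) :
    m (word [a]) (word [b]) =
      word [a,b] + word [b,a] + ((φ a b).sum fun c k => Finsupp.single [c] k) := by
  rw [hm.2.2 a b [] [], hm.1, hm.2.1, word_cons, word_cons]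
  congr 1
  refine Finsupp.sum_congr fun c _ => ?_
  rw [hm.1, word_cons, single_eq_smul_word]

lemma comm_forward (hm : IsPhiShuffle φ m) (h : ∀ p q : List Y →₀ K, m p q = m q p) :
    PhiComm φ := by
  intro a b
  have h1 := h (word [a]) (word [b])
  rw [mul_single_single hm a b, mul_single_single hm b a] at h1
  have h2 : ((φ a b).sum fun c k => (Finsupp.single [c] k : List Y →₀ K)) =
      (φ b a).sum fun c k => Finsupp.single [c] k := by
    have : word [a,b] + word [b,a] = word [b,a] + (word [a,b] : List Y →₀ K) := add_comm _ _
    rw [this] at h1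
    exact add_left_cancel h1
  have hinj : Function.Injective (fun c : Y => [c]) := fun x y h => by simpa using h
  have := Finsupp.mapDomain_injective hinj (α := Y) (M := K)
  apply this
  simpa [Finsupp.mapDomain] using h2

lemma assoc_forward (hm : IsPhiShuffle φ m)
    (h : ∀ p q r : List Y →₀ K, m (m p q) r = m p (m q r)) : PhiAssoc φ := by
  intro a b c
  have H := h (word [a]) (word [b]) (word [c])
  simp only [hm.2.2, hm.1, hm.2.1, word_cons, map_add, LinearMap.add_apply,
    m_sum_left, m_sum_right, consL_sum, smul_add, Finsupp.sum_add] at H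
  rw [phiExt_single_right, phiExt_single_left]
  ext z
  have Hz := DFunLike.congr_fun H [z]
  clear H
  simp only [Finsupp.add_apply, Finsupp.smul_apply, Finsupp.sum_apply, word,
    Finsupp.single_apply, smul_eq_mul, mul_ite, mul_one, mul_zero,
    List.cons.injEq, and_false, false_and, and_true, if_false, if_true,
    reduceCtorEq, ite_false, Finsupp.sum_fun_zero, add_zero, zero_add,
    Finsupp.sum_ite_eq', Finsupp.if_mem_support] at Hz
  simp only [Finsupp.sum_apply, Finsupp.smul_apply, smul_eq_mul]
  exact Hz

end PhiSh

/-- the `φ`-shuffle is associative iff (the bilinear extension of)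
`φ` is associative, and commutative iff `φ` is commutative. -/
theorem phiShuffle_assoc_comm_iff (φ : Y → Y → (Y →₀ K))
    (m : (List Y →₀ K) →ₗ[K] (List Y →₀ K) →ₗ[K] (List Y →₀ K))
    (hm : IsPhiShuffle φ m) :
    ((∀ p q r : List Y →₀ K, m (m p q) r = m p (m q r)) ↔ PhiAssoc φ) ∧
    ((∀ p q : List Y →₀ K, m p q = m q p) ↔ PhiComm φ) := by
  constructor
  · exact ⟨PhiSh.assoc_forward hm, fun hφ p q r => PhiSh.assoc_all hm hφ p q r⟩
  · exact ⟨PhiSh.comm_forward hm, fun hφ p q => PhiSh.comm_all hm hφ p q⟩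

end
end

section
/- The φ-shuffle product ⧢_φ is dualizable (i.e., there exists a linear coproduct Δ : K⟨Y⟩ → K⟨Y⟩ ⊗ K⟨Y⟩ with ⟨u ⧢_φ v, w⟩ = ⟨u ⊗ v, Δ(w)⟩ for all words u,v,w) if and only if for every letter z ∈ Y, the set {(x,y) ∈ Y² : γ^z_{x,y} ≠ 0} is finite, where γ^z_{x,y} = ⟨φ(x,y), z⟩ are the structure constants of φ. -/
noncomputable section

open Finsupp

variable {K : Type*} [CommRing K] [Algebra ℚ K]
variable {Y : Type*} [DecidableEq Y]

-- evaluation of consL at a cons word / nil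
lemma consL_apply_cons (a c : Y) (p : List Y →₀ K) (w : List Y) :
    consL a p (c :: w) = if c = a then p w else 0 := by
  by_cases h : c = a
  · subst h
    rw [if_pos rfl]
    exact Finsupp.mapDomain_apply List.cons_injective p w
  · rw [if_neg h]
    refine Finsupp.mapDomain_notin_range p _ ?_
    rintro ⟨t, ht⟩
    exact h (by injection ht with h1 h2; exact h1.symm)

omit [Algebra ℚ K] [DecidableEq Y] in
lemma consL_apply_nil (a : Y) (p : List Y →₀ K) :
    consL a p ([] : List Y) = 0 :=
  Finsupp.mapDomain_notin_range p _ (by rintro ⟨t, ht⟩; exact List.cons_ne_nil a t ht)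

lemma single_letter (φ : Y → Y → (Y →₀ K))
    (m : (List Y →₀ K) →ₗ[K] (List Y →₀ K) →ₗ[K] (List Y →₀ K))
    (hm : IsPhiShuffle φ m) (x y z : Y) :
    m (word [x]) (word [y]) [z] = φ x y z := by
  have h := hm.2.2 x y [] []
  rw [hm.1, hm.2.1, hm.1] at h
  rw [h]
  rw [Finsupp.add_apply, Finsupp.add_apply, Finsupp.sum_apply]
  have h1 : consL x ((word [y] : List Y →₀ K)) [z] = 0 := by
    rw [consL_apply_cons]
    split
    · simp [word, Finsupp.single_apply]
    · rfl
  have h2 : consL y ((word [x] : List Y →₀ K)) [z] = 0 := by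
    rw [consL_apply_cons]
    split
    · simp [word, Finsupp.single_apply]
    · rfl
  rw [h1, h2, zero_add, zero_add]
  rw [Finsupp.sum]
  have : ∀ c ∈ (φ x y).support, (φ x y c • consL c (word [] : List Y →₀ K)) [z]
      = if c = z then φ x y c else 0 := by
    intro c _
    rw [Finsupp.smul_apply, consL_apply_cons]
    simp [word, Finsupp.single_apply, eq_comm]
  rw [Finset.sum_congr rfl this, Finset.sum_ite_eq' (φ x y).support z (fun c => φ x y c)]
  split
  · rfl
  · exact (Finsupp.notMem_support_iff.mp (by assumption)).symm

lemma key_lemma (φ : Y → Y → (Y →₀ K))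
    (m : (List Y →₀ K) →ₗ[K] (List Y →₀ K) →ₗ[K] (List Y →₀ K))
    (hm : IsPhiShuffle φ m) :
    ∀ (n : ℕ) (u v w : List Y), u.length + v.length ≤ n →
      m (word u) (word v) w ≠ 0 →
      u.length ≤ w.length ∧ v.length ≤ w.length ∧
      (∀ x ∈ u, x ∈ w ∨ ∃ p : Y × Y, (∃ z ∈ w, φ p.1 p.2 z ≠ 0) ∧ (x = p.1 ∨ x = p.2)) ∧
      (∀ x ∈ v, x ∈ w ∨ ∃ p : Y × Y, (∃ z ∈ w, φ p.1 p.2 z ≠ 0) ∧ (x = p.1 ∨ x = p.2)) := by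
  intro n
  induction n with
  | zero =>
    intro u v w hn hne
    have hu : u = [] := List.eq_nil_of_length_eq_zero (by omega)
    have hv : v = [] := List.eq_nil_of_length_eq_zero (by omega)
    subst hu; subst hv
    rw [hm.1 []] at hne
    have hw : w = [] := by
      by_contra hc
      exact hne (Finsupp.single_eq_of_ne hc)
    subst hw
    exact ⟨le_refl _, le_refl _, by simp, by simp⟩
  | succ n ih =>
    intro u v w hn hne
    match u, v with
    | [], v =>
      rw [hm.1 v] at hne
      have hw : w = v := by
        by_contra hc
        exact hne (Finsupp.single_eq_of_ne hc)
      subst hw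
      exact ⟨by simp, le_refl _, by simp, fun x hx => Or.inl hx⟩
    | u, [] =>
      rw [hm.2.1 u] at hne
      have hw : w = u := by
        by_contra hc
        exact hne (Finsupp.single_eq_of_ne hc)
      subst hw
      exact ⟨le_refl _, by simp, fun x hx => Or.inl hx, by simp⟩
    | a :: u', b :: v' =>
      rw [hm.2.2 a b u' v'] at hne
      -- w must be nonempty
      match w with
      | [] =>
        exfalso
        apply hne
        simp [Finsupp.add_apply, Finsupp.sum_apply, Finsupp.sum, Finsupp.smul_apply,
          consL_apply_nil]
      | c₀ :: w' =>
        simp only [Finsupp.add_apply, Finsupp.sum_apply, Finsupp.sum, Finset.sum_apply',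
          Finsupp.smul_apply, consL_apply_cons, smul_ite, smul_zero, smul_eq_mul, mul_ite, mul_zero] at hne
        rw [Finset.sum_ite_eq (φ a b).support c₀
          (fun c => φ a b c * m (word u') (word v') w')] at hne
        rw [show (if c₀ ∈ (φ a b).support then φ a b c₀ * m (word u') (word v') w' else 0)
            = φ a b c₀ * m (word u') (word v') w' by
          split
          · rfl
          · rw [Finsupp.notMem_support_iff.mp (by assumption), zero_mul]] at hne
        -- at least one of three terms nonzero
        have hcases : (c₀ = a ∧ m (word u') (word (b :: v')) w' ≠ 0) ∨
            (c₀ = b ∧ m (word (a :: u')) (word v') w' ≠ 0) ∨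
            (φ a b c₀ ≠ 0 ∧ m (word u') (word v') w' ≠ 0) := by
          by_contra hc
          push_neg at hc
          apply hne
          have e1 : (if c₀ = a then m (word u') (word (b :: v')) w' else 0) = 0 := by
            split
            · exact hc.1 (by assumption)
            · rfl
          have e2 : (if c₀ = b then m (word (a :: u')) (word v') w' else 0) = 0 := by
            split
            · exact hc.2.1 (by assumption)
            · rfl
          have e3 : φ a b c₀ * m (word u') (word v') w' = 0 := by
            by_cases h : φ a b c₀ = 0
            · rw [h, zero_mul]
            · rw [hc.2.2 h, mul_zero]
          rw [e1, e2, e3, add_zero, add_zero]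
        simp only [List.length_cons] at hn ⊢
        rcases hcases with ⟨hca, hX⟩ | ⟨hcb, hX⟩ | ⟨hφ, hX⟩
        · subst hca
          obtain ⟨l1, l2, m1, m2⟩ := ih u' (b :: v') w' (by simp at hn ⊢; omega) hX
          simp only [List.length_cons] at l2 m2
          refine ⟨by omega, by omega, ?_, ?_⟩
          · intro x hx
            rcases List.mem_cons.mp hx with h | h
            · exact Or.inl (h ▸ List.mem_cons_self)
            · rcases m1 x h with h' | ⟨p, ⟨z, hz, hp⟩, hxp⟩
              · exact Or.inl (List.mem_cons_of_mem _ h')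
              · exact Or.inr ⟨p, ⟨z, List.mem_cons_of_mem _ hz, hp⟩, hxp⟩
          · intro x hx
            rcases m2 x hx with h' | ⟨p, ⟨z, hz, hp⟩, hxp⟩
            · exact Or.inl (List.mem_cons_of_mem _ h')
            · exact Or.inr ⟨p, ⟨z, List.mem_cons_of_mem _ hz, hp⟩, hxp⟩
        · subst hcb
          obtain ⟨l1, l2, m1, m2⟩ := ih (a :: u') v' w' (by simp at hn ⊢; omega) hX
          simp only [List.length_cons] at l1 m1
          refine ⟨by omega, by omega, ?_, ?_⟩
          · intro x hx
            rcases m1 x hx with h' | ⟨p, ⟨z, hz, hp⟩, hxp⟩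
            · exact Or.inl (List.mem_cons_of_mem _ h')
            · exact Or.inr ⟨p, ⟨z, List.mem_cons_of_mem _ hz, hp⟩, hxp⟩
          · intro x hx
            rcases List.mem_cons.mp hx with h | h
            · exact Or.inl (h ▸ List.mem_cons_self)
            · rcases m2 x h with h' | ⟨p, ⟨z, hz, hp⟩, hxp⟩
              · exact Or.inl (List.mem_cons_of_mem _ h')
              · exact Or.inr ⟨p, ⟨z, List.mem_cons_of_mem _ hz, hp⟩, hxp⟩
        · obtain ⟨l1, l2, m1, m2⟩ := ih u' v' w' (by omega) hX
          refine ⟨by omega, by omega, ?_, ?_⟩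
          · intro x hx
            rcases List.mem_cons.mp hx with h | h
            · exact Or.inr ⟨(a, b), ⟨c₀, List.mem_cons_self, hφ⟩, Or.inl h⟩
            · rcases m1 x h with h' | ⟨p, ⟨z, hz, hp⟩, hxp⟩
              · exact Or.inl (List.mem_cons_of_mem _ h')
              · exact Or.inr ⟨p, ⟨z, List.mem_cons_of_mem _ hz, hp⟩, hxp⟩
          · intro x hx
            rcases List.mem_cons.mp hx with h | h
            · exact Or.inr ⟨(a, b), ⟨c₀, List.mem_cons_self, hφ⟩, Or.inr h⟩
            · rcases m2 x h with h' | ⟨p, ⟨z, hz, hp⟩, hxp⟩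
              · exact Or.inl (List.mem_cons_of_mem _ h')
              · exact Or.inr ⟨p, ⟨z, List.mem_cons_of_mem _ hz, hp⟩, hxp⟩

lemma finite_lists {s : Set Y} (hs : s.Finite) :
    ∀ n : ℕ, {l : List Y | l.length ≤ n ∧ ∀ x ∈ l, x ∈ s}.Finite := by
  intro n
  induction n with
  | zero =>
    apply Set.Finite.subset (Set.finite_singleton ([] : List Y))
    rintro l ⟨hl, -⟩
    exact List.eq_nil_of_length_eq_zero (Nat.le_zero.mp hl)
  | succ n ih =>
    apply Set.Finite.subset (Set.Finite.union (Set.finite_singleton ([] : List Y))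
      (Set.Finite.image (fun q : Y × List Y => q.1 :: q.2)
        (Set.Finite.prod hs ih)))
    rintro l ⟨hl, hmem⟩
    match l with
    | [] => exact Or.inl rfl
    | a :: l' =>
      refine Or.inr ⟨(a, l'), ⟨hmem a (List.mem_cons_self),
        ⟨by simpa using hl, fun x hx => hmem x (List.mem_cons_of_mem _ hx)⟩⟩, rfl⟩


/-- the `φ`-shuffle is dualizable iff for every letter `z` the set
`{(x,y) : γ^z_{x,y} ≠ 0}` is finite. -/
theorem phiShuffle_dualizable_iff (φ : Y → Y → (Y →₀ K))
    (m : (List Y →₀ K) →ₗ[K] (List Y →₀ K) →ₗ[K] (List Y →₀ K))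
    (hm : IsPhiShuffle φ m) :
    (∃ Δfn : List Y → (List Y × List Y →₀ K), IsDualWitness m Δfn) ↔
      PhiDualizable φ := by
  constructor
  · rintro ⟨Δfn, hΔ⟩ z
    have hsub : {p : Y × Y | φ p.1 p.2 z ≠ 0} ⊆
        (fun p : Y × Y => (([p.1], [p.2]) : List Y × List Y)) ⁻¹' ↑(Δfn [z]).support := by
      intro p hp
      simp only [Set.mem_preimage, Finset.mem_coe, Finsupp.mem_support_iff]
      rw [← hΔ [p.1] [p.2] [z]]
      rw [single_letter φ m hm]
      exact hp
    exact Set.Finite.subset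
      (Set.Finite.preimage
        (Set.injOn_of_injective (fun p q h => by
          simp only [Prod.mk.injEq, List.cons.injEq] at h
          exact Prod.ext h.1.1 h.2.1))
        (Finset.finite_toSet _)) hsub
  · intro hφ
    have hT : ∀ w : List Y,
        {q : List Y × List Y | m (word q.1) (word q.2) w ≠ 0}.Finite := by
      intro w
      set s : Set Y := {x | x ∈ w} ∪
        ⋃ z ∈ {z : Y | z ∈ w}, (Prod.fst '' {p : Y × Y | φ p.1 p.2 z ≠ 0} ∪
          Prod.snd '' {p : Y × Y | φ p.1 p.2 z ≠ 0}) with hs_def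
      have hsfin : s.Finite := by
        apply Set.Finite.union
        · exact List.finite_toSet w
        · exact Set.Finite.biUnion (List.finite_toSet w)
            (fun z _ => Set.Finite.union (Set.Finite.image _ (hφ z)) (Set.Finite.image _ (hφ z)))
      have hL := finite_lists hsfin w.length
      apply Set.Finite.subset (Set.Finite.prod hL hL)
      rintro ⟨u, v⟩ hq
      obtain ⟨l1, l2, m1, m2⟩ := key_lemma φ m hm (u.length + v.length) u v w le_rfl hq
      have hmem : ∀ (x : Y),
          (x ∈ w ∨ ∃ p : Y × Y, (∃ z ∈ w, φ p.1 p.2 z ≠ 0) ∧ (x = p.1 ∨ x = p.2)) → x ∈ s := by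
        rintro x (h | ⟨p, ⟨z, hz, hpz⟩, hx | hx⟩)
        · exact Or.inl h
        · exact Or.inr (Set.mem_biUnion hz (Or.inl ⟨p, hpz, hx.symm⟩))
        · exact Or.inr (Set.mem_biUnion hz (Or.inr ⟨p, hpz, hx.symm⟩))
      exact ⟨⟨l1, fun x hx => hmem x (m1 x hx)⟩, ⟨l2, fun x hx => hmem x (m2 x hx)⟩⟩
    refine ⟨fun w => Finsupp.onFinset (hT w).toFinset
      (fun q => m (word q.1) (word q.2) w)
      (fun q hq => (Set.Finite.mem_toFinset _).2 hq), ?_⟩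
    intro u v w
    rfl


end
end

section
/- For Lyndon words l_1,...,l_k and positive integers i_1,...,i_k, one has l_1^{⧢_φ i_1} ⧢_φ ⋯ ⧢_φ l_k^{⧢_φ i_k} = l_1^{⧢ i_1} ⧢ ⋯ ⧢ l_k^{⧢ i_k} + Σ_v c_v v, where ⧢ is the ordinary shuffle and the correction sum runs over words v of length strictly less than Σ_j i_j|l_j|. -/
noncomputable section

open Finsupp

variable {K : Type*} [CommRing K] [Algebra ℚ K]
variable {Y : Type*} [DecidableEq Y]

/-! ### Auxiliary lemmas -/

lemma support_consL (a : Y) (P : List Y →₀ K) :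
    (consL a P).support ⊆ P.support.image (List.cons a) := by
  classical
  have : consL a P = Finsupp.mapDomain (List.cons a) P := rfl
  rw [this]
  exact Finsupp.mapDomain_support

lemma support_word (u : List Y) : (word u : List Y →₀ K).support ⊆ {u} :=
  Finsupp.support_single_subset

/-- Length-degree bound for the `φ`-shuffle of two words. -/
lemma word_le {φ : Y → Y → (Y →₀ K)}
    {m : (List Y →₀ K) →ₗ[K] (List Y →₀ K) →ₗ[K] (List Y →₀ K)}
    (hm : IsPhiShuffle φ m) :
    ∀ (n : ℕ) (u v : List Y), u.length + v.length ≤ n →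
      ∀ w ∈ (m (word u) (word v)).support, w.length ≤ u.length + v.length := by
  intro n
  induction n with
  | zero =>
    intro u v huv w hw
    have hu : u = [] := by cases u with | nil => rfl | cons a u => simp at huv
    subst hu
    rw [hm.1] at hw
    have := support_word v hw
    simp only [Finset.mem_singleton] at this
    subst this; simp
  | succ n ih =>
    intro u v huv w hw
    cases u with
    | nil =>
      rw [hm.1] at hw
      have := support_word v hw
      simp only [Finset.mem_singleton] at this
      subst this; simp
    | cons a u =>
      cases v with
      | nil =>
        rw [hm.2.1] at hw
        have := support_word (a :: u) hw
        simp only [Finset.mem_singleton] at this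
        subst this; simp
      | cons b v =>
        rw [hm.2.2 a b u v] at hw
        simp only [List.length_cons] at huv ⊢
        rcases Finset.mem_union.mp (Finsupp.support_add hw) with h | h
        · rcases Finset.mem_union.mp (Finsupp.support_add h) with h1 | h1
          · obtain ⟨w', hw', rfl⟩ := Finset.mem_image.mp (support_consL a _ h1)
            have := ih u (b :: v) (by simp at huv ⊢; omega) w' hw'
            simp only [List.length_cons] at this ⊢
            omega
          · obtain ⟨w', hw', rfl⟩ := Finset.mem_image.mp (support_consL b _ h1)
            have := ih (a :: u) v (by simp at huv ⊢; omega) w' hw'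
            simp only [List.length_cons] at this ⊢
            omega
        · obtain ⟨c, _, hc⟩ := Finset.mem_biUnion.mp (Finsupp.support_sum h)
          have hc' := Finsupp.support_smul hc
          obtain ⟨w', hw', rfl⟩ := Finset.mem_image.mp (support_consL c _ hc')
          have := ih u v (by omega) w' hw'
          simp only [List.length_cons]
          omega

/-- The `φ`-shuffle of two words differs from the ordinary shuffle by lower-length terms. -/
lemma word_lt {φ : Y → Y → (Y →₀ K)}
    {m msh : (List Y →₀ K) →ₗ[K] (List Y →₀ K) →ₗ[K] (List Y →₀ K)}
    (hm : IsPhiShuffle φ m) (hsh : IsPhiShuffle (fun _ _ => 0) msh) :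
    ∀ (n : ℕ) (u v : List Y), u.length + v.length ≤ n →
      ∀ w ∈ (m (word u) (word v) - msh (word u) (word v)).support,
        w.length < u.length + v.length := by
  intro n
  induction n with
  | zero =>
    intro u v huv w hw
    have hu : u = [] := by cases u with | nil => rfl | cons a u => simp at huv
    subst hu
    rw [hm.1, hsh.1, sub_self] at hw
    simp at hw
  | succ n ih =>
    intro u v huv w hw
    cases u with
    | nil =>
      rw [hm.1, hsh.1, sub_self] at hw
      simp at hw
    | cons a u =>
      cases v with
      | nil =>
        rw [hm.2.1, hsh.2.1, sub_self] at hw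
        simp at hw
      | cons b v =>
        have e : m (word (a :: u)) (word (b :: v)) - msh (word (a :: u)) (word (b :: v)) =
            consL a (m (word u) (word (b :: v)) - msh (word u) (word (b :: v))) +
            consL b (m (word (a :: u)) (word v) - msh (word (a :: u)) (word v)) +
            (φ a b).sum (fun c k => k • consL c (m (word u) (word v))) := by
          rw [hm.2.2, hsh.2.2, Finsupp.sum_zero_index, map_sub, map_sub]
          abel
        rw [e] at hw
        simp only [List.length_cons] at huv ⊢
        rcases Finset.mem_union.mp (Finsupp.support_add hw) with h | h
        · rcases Finset.mem_union.mp (Finsupp.support_add h) with h1 | h1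
          · obtain ⟨w', hw', rfl⟩ := Finset.mem_image.mp (support_consL a _ h1)
            have := ih u (b :: v) (by simp at huv ⊢; omega) w' hw'
            simp only [List.length_cons] at this ⊢
            omega
          · obtain ⟨w', hw', rfl⟩ := Finset.mem_image.mp (support_consL b _ h1)
            have := ih (a :: u) v (by simp at huv ⊢; omega) w' hw'
            simp only [List.length_cons] at this ⊢
            omega
        · obtain ⟨c, _, hc⟩ := Finset.mem_biUnion.mp (Finsupp.support_sum h)
          have hc' := Finsupp.support_smul hc
          obtain ⟨w', hw', rfl⟩ := Finset.mem_image.mp (support_consL c _ hc')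
          have := word_le hm (u.length + v.length) u v le_rfl w' hw'
          simp only [List.length_cons]
          omega

lemma eq_sum_word (p : List Y →₀ K) :
    p = ∑ u ∈ p.support, p u • (word u : List Y →₀ K) := by
  conv_lhs => rw [← Finsupp.sum_single p]
  rw [Finsupp.sum]
  refine Finset.sum_congr rfl fun u _ => ?_
  rw [word, Finsupp.smul_single, smul_eq_mul, mul_one]

lemma decomp (M : (List Y →₀ K) →ₗ[K] (List Y →₀ K) →ₗ[K] (List Y →₀ K))
    (p q : List Y →₀ K) :
    M p q = ∑ u ∈ p.support, ∑ v ∈ q.support, (p u * q v) • M (word u) (word v) := by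
  conv_lhs => rw [eq_sum_word p]
  rw [map_sum, LinearMap.sum_apply]
  refine Finset.sum_congr rfl fun u _ => ?_
  rw [map_smul, LinearMap.smul_apply]
  conv_lhs => rw [eq_sum_word q]
  rw [map_sum, Finset.smul_sum]
  refine Finset.sum_congr rfl fun v _ => ?_
  rw [map_smul, smul_smul]

/-- Supports of bilinear images are controlled by supports on words. -/
lemma key (M : (List Y →₀ K) →ₗ[K] (List Y →₀ K) →ₗ[K] (List Y →₀ K))
    (p q : List Y →₀ K) {C : List Y → Prop}
    (h : ∀ u ∈ p.support, ∀ v ∈ q.support, ∀ w ∈ (M (word u) (word v)).support, C w) :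
    ∀ w ∈ (M p q).support, C w := by
  intro w hw
  rw [decomp] at hw
  obtain ⟨u, hu, hw1⟩ := Finsupp.mem_support_finset_sum w hw
  obtain ⟨v, hv, hw2⟩ := Finsupp.mem_support_finset_sum w hw1
  exact h u hu v hv w (Finsupp.support_smul hw2)

lemma key2 (M N : (List Y →₀ K) →ₗ[K] (List Y →₀ K) →ₗ[K] (List Y →₀ K))
    (p q : List Y →₀ K) {C : List Y → Prop}
    (h : ∀ u ∈ p.support, ∀ v ∈ q.support,
      ∀ w ∈ (M (word u) (word v) - N (word u) (word v)).support, C w) :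
    ∀ w ∈ (M p q - N p q).support, C w := by
  intro w hw
  have e : M p q - N p q = ∑ u ∈ p.support, ∑ v ∈ q.support,
      (p u * q v) • (M (word u) (word v) - N (word u) (word v)) := by
    rw [decomp M, decomp N, ← Finset.sum_sub_distrib]
    refine Finset.sum_congr rfl fun u _ => ?_
    rw [← Finset.sum_sub_distrib]
    exact Finset.sum_congr rfl fun v _ => (smul_sub _ _ _).symm
  rw [e] at hw
  obtain ⟨u, hu, hw1⟩ := Finsupp.mem_support_finset_sum w hw
  obtain ⟨v, hv, hw2⟩ := Finsupp.mem_support_finset_sum w hw1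
  exact h u hu v hv w (Finsupp.support_smul hw2)

lemma mpow_le {φ : Y → Y → (Y →₀ K)}
    {m : (List Y →₀ K) →ₗ[K] (List Y →₀ K) →ₗ[K] (List Y →₀ K)}
    (hm : IsPhiShuffle φ m) (l : List Y) :
    ∀ n, ∀ w ∈ (mpow m (word l) n).support, w.length ≤ n * l.length := by
  intro n
  induction n with
  | zero =>
    intro w hw
    have := support_word ([] : List Y) hw
    simp only [Finset.mem_singleton] at this
    subst this; simp
  | succ n ih =>
    intro w hw
    have hw' : w ∈ (m (word l) (mpow m (word l) n)).support := hw
    refine key m _ _ (C := fun x => x.length ≤ (n+1) * l.length) ?_ w hw'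
    intro u hu v hv x hx
    have hul := support_word l hu
    simp only [Finset.mem_singleton] at hul
    subst hul
    have h1 := word_le hm (u.length + v.length) u v le_rfl x hx
    have h2 := ih v hv
    rw [Nat.succ_mul]
    omega

lemma mpow_diff {φ : Y → Y → (Y →₀ K)}
    {m msh : (List Y →₀ K) →ₗ[K] (List Y →₀ K) →ₗ[K] (List Y →₀ K)}
    (hm : IsPhiShuffle φ m) (hsh : IsPhiShuffle (fun _ _ => 0) msh) (l : List Y) :
    ∀ n, ∀ w ∈ (mpow m (word l) n - mpow msh (word l) n).support,
      w.length < n * l.length := by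
  intro n
  induction n with
  | zero =>
    intro w hw
    simp only [mpow, sub_self] at hw
    simp at hw
  | succ n ih =>
    intro w hw
    have e : mpow m (word l) (n + 1) - mpow msh (word l) (n + 1) =
        (m (word l) (mpow m (word l) n) - msh (word l) (mpow m (word l) n)) +
        msh (word l) (mpow m (word l) n - mpow msh (word l) n) := by
      show m (word l) (mpow m (word l) n) - msh (word l) (mpow msh (word l) n) = _
      rw [map_sub]
      abel
    rw [e] at hw
    rcases Finset.mem_union.mp (Finsupp.support_add hw) with h | h
    · refine key2 m msh _ _ (C := fun x => x.length < (n+1) * l.length) ?_ w h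
      intro u hu v hv x hx
      have hul := support_word l hu
      simp only [Finset.mem_singleton] at hul
      subst hul
      have h1 := word_lt hm hsh (u.length + v.length) u v le_rfl x hx
      have h2 := mpow_le hm u n v hv
      rw [Nat.succ_mul]
      omega
    · refine key msh _ _ (C := fun x => x.length < (n+1) * l.length) ?_ w h
      intro u hu v hv x hx
      have hul := support_word l hu
      simp only [Finset.mem_singleton] at hul
      subst hul
      have h1 := word_le hsh (u.length + v.length) u v le_rfl x hx
      have h2 := ih v hv
      rw [Nat.succ_mul]
      omega

lemma shMonomial_cons (m : (List Y →₀ K) →ₗ[K] (List Y →₀ K) →ₗ[K] (List Y →₀ K))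
    (p : List Y × ℕ) (t : List (List Y × ℕ)) :
    shMonomial m (p :: t) = m (mpow m (word p.1) p.2) (shMonomial m t) := rfl

lemma shMon_le {φ : Y → Y → (Y →₀ K)}
    {m : (List Y →₀ K) →ₗ[K] (List Y →₀ K) →ₗ[K] (List Y →₀ K)}
    (hm : IsPhiShuffle φ m) :
    ∀ s : List (List Y × ℕ), ∀ w ∈ (shMonomial m s).support,
      w.length ≤ (s.map fun p => p.2 * p.1.length).sum := by
  intro s
  induction s with
  | nil =>
    intro w hw
    have := support_word ([] : List Y) hw
    simp only [Finset.mem_singleton] at this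
    subst this; simp
  | cons p t ih =>
    intro w hw
    rw [shMonomial_cons] at hw
    refine key m _ _ (C := fun x => x.length ≤ ((p :: t).map fun q => q.2 * q.1.length).sum) ?_ w hw
    intro u hu v hv x hx
    have h1 := word_le hm (u.length + v.length) u v le_rfl x hx
    have h2 := mpow_le hm p.1 p.2 u hu
    have h3 := ih v hv
    simp only [List.map_cons, List.sum_cons]
    omega

lemma shMon_diff {φ : Y → Y → (Y →₀ K)}
    {m msh : (List Y →₀ K) →ₗ[K] (List Y →₀ K) →ₗ[K] (List Y →₀ K)}
    (hm : IsPhiShuffle φ m) (hsh : IsPhiShuffle (fun _ _ => 0) msh) :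
    ∀ s : List (List Y × ℕ), ∀ w ∈ (shMonomial m s - shMonomial msh s).support,
      w.length < (s.map fun p => p.2 * p.1.length).sum := by
  intro s
  induction s with
  | nil =>
    intro w hw
    rw [show shMonomial m ([] : List (List Y × ℕ)) = word [] from rfl,
      show shMonomial msh ([] : List (List Y × ℕ)) = word [] from rfl, sub_self] at hw
    simp at hw
  | cons p t ih =>
    intro w hw
    have e : shMonomial m (p :: t) - shMonomial msh (p :: t) =
        (m (mpow m (word p.1) p.2) (shMonomial m t) -
          msh (mpow m (word p.1) p.2) (shMonomial m t)) +
        msh (mpow m (word p.1) p.2 - mpow msh (word p.1) p.2) (shMonomial m t) +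
        msh (mpow msh (word p.1) p.2) (shMonomial m t - shMonomial msh t) := by
      rw [shMonomial_cons, shMonomial_cons]
      simp only [map_sub, LinearMap.sub_apply]
      abel
    rw [e] at hw
    simp only [List.map_cons, List.sum_cons]
    rcases Finset.mem_union.mp (Finsupp.support_add hw) with h | h
    · rcases Finset.mem_union.mp (Finsupp.support_add h) with h1 | h1
      · refine key2 m msh _ _
          (C := fun x => x.length < p.2 * p.1.length + (t.map fun q => q.2 * q.1.length).sum)
          ?_ w h1
        intro u hu v hv x hx
        have h1 := word_lt hm hsh (u.length + v.length) u v le_rfl x hx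
        have h2 := mpow_le hm p.1 p.2 u hu
        have h3 := shMon_le hm t v hv
        omega
      · refine key msh _ _
          (C := fun x => x.length < p.2 * p.1.length + (t.map fun q => q.2 * q.1.length).sum)
          ?_ w h1
        intro u hu v hv x hx
        have h1 := word_le hsh (u.length + v.length) u v le_rfl x hx
        have h2 := mpow_diff hm hsh p.1 p.2 u hu
        have h3 := shMon_le hm t v hv
        omega
    · refine key msh _ _
          (C := fun x => x.length < p.2 * p.1.length + (t.map fun q => q.2 * q.1.length).sum)
          ?_ w h
      intro u hu v hv x hx
      have h1 := word_le hsh (u.length + v.length) u v le_rfl x hx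
      have h2 := mpow_le hsh p.1 p.2 u hu
      have h3 := ih v hv
      omega

/-- a `⧢_φ`-monomial in Lyndon words equals the corresponding
ordinary shuffle monomial plus a correction supported on words of strictly
smaller length. -/
theorem phiShuffle_monomial_triangular [LinearOrder Y] (φ : Y → Y → (Y →₀ K))
    (m msh : (List Y →₀ K) →ₗ[K] (List Y →₀ K) →ₗ[K] (List Y →₀ K))
    (hm : IsPhiShuffle φ m) (hsh : IsPhiShuffle (fun _ _ => 0) msh)
    (hassoc : PhiAssoc φ)
    (s : List (List Y × ℕ)) (hs : ∀ p ∈ s, IsLyndon p.1 ∧ 0 < p.2) :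
    ∃ c : List Y →₀ K,
      shMonomial m s = shMonomial msh s + c ∧
      ∀ v ∈ c.support, v.length < (s.map fun p => p.2 * p.1.length).sum := by
  exact ⟨shMonomial m s - shMonomial msh s, by abel, fun v hv => shMon_diff hm hsh s v hv⟩

end
end
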